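/- A lower transition operator T on a finite nonempty set 𝒳 is ergodic (for all f ∈ 𝓛(𝒳), lim_{n→∞} T^n f exists and is a constant function) if and only if T is regularly absorbing. -/

import Mathlib

open Filter Topology

/-- The minimum of a real-valued function on a finite nonempty type. -/
noncomputable def minf {X : Type*} [Fintype X] [Nonempty X] (f : X → ℝ) : ℝ :=
  Finset.univ.inf' Finset.univ_nonempty f

/-- The maximum of a real-valued function on a finite nonempty type. -/
noncomputable def maxf {X : Type*} [Fintype X] [Nonempty X] (f : X → ℝ) : ℝ :=
  Finset.univ.sup' Finset.univ_nonempty f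

/-- The (real-valued) indicator function of a set. -/
noncomputable def ind {X : Type*} (A : Set X) : X → ℝ := A.indicator 1

/-- The conjugate (upper) operator `f ↦ -(Q (-f))`. -/
def conjOp {X : Type*} (Q : (X → ℝ) → (X → ℝ)) : (X → ℝ) → (X → ℝ) :=
  fun f => -(Q (-f))

/-- A lower transition rate operator. -/
def IsLTRO {X : Type*} [Fintype X] (Q : (X → ℝ) → (X → ℝ)) : Prop :=
  (∀ μ : ℝ, Q (fun _ => μ) = 0) ∧
  (∀ f g : X → ℝ, Q f + Q g ≤ Q (f + g)) ∧
  (∀ l : ℝ, 0 ≤ l → ∀ f : X → ℝ, Q (l • f) = l • Q f) ∧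
  (∀ x y : X, x ≠ y → 0 ≤ Q (ind {y}) x)

/-- A lower transition operator. -/
def IsLTO {X : Type*} [Fintype X] [Nonempty X] (T : (X → ℝ) → (X → ℝ)) : Prop :=
  (∀ f : X → ℝ, ∀ x : X, minf f ≤ T f x) ∧
  (∀ f g : X → ℝ, T f + T g ≤ T (f + g)) ∧
  (∀ l : ℝ, 0 ≤ l → ∀ f : X → ℝ, T (l • f) = l • T f)

/-- `T` is the family of operators solving `d/dt T_t f = Q (T_t f)` on `[0,∞)`
with `T_0 f = f`. -/
def IsSol {X : Type*} [Fintype X] (Q : (X → ℝ) → (X → ℝ))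
    (T : ℝ → (X → ℝ) → (X → ℝ)) : Prop :=
  (∀ f : X → ℝ, T 0 f = f) ∧
  (∀ f : X → ℝ, ∀ t : ℝ, 0 ≤ t →
    HasDerivWithinAt (fun s => T s f) (Q (T t f)) (Set.Ici 0) t)

/-- Ergodicity of a lower transition rate operator, expressed via its
associated time-dependent family `T`. -/
def ErgodicQ {X : Type*} [Fintype X] (T : ℝ → (X → ℝ) → (X → ℝ)) : Prop :=
  ∀ f : X → ℝ, ∃ c : ℝ, Tendsto (fun t => T t f) atTop (𝓝 (fun _ : X => c))

/-- Ergodicity of a lower transition operator. -/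
def ErgodicT {X : Type*} [Fintype X] (T : (X → ℝ) → (X → ℝ)) : Prop :=
  ∀ f : X → ℝ, ∃ c : ℝ, Tendsto (fun n : ℕ => T^[n] f) atTop (𝓝 (fun _ : X => c))

/-- `x` is upper reachable from `y` (w.r.t. the lower transition rate operator `Q`). -/
def upperReach {X : Type*} [Fintype X] (Q : (X → ℝ) → (X → ℝ)) (y x : X) : Prop :=
  ∃ (n : ℕ) (p : ℕ → X), p 0 = y ∧ p n = x ∧
    ∀ k : ℕ, k < n → p (k + 1) ≠ p k ∧ 0 < conjOp Q (ind {p (k + 1)}) (p k)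

/-- One step of the lower-reachability construction: `A ↦ A ∪ {y ∉ A : Q(𝟙_A)(y) > 0}`. -/
def lowerStep {X : Type*} [Fintype X] (Q : (X → ℝ) → (X → ℝ)) (A : Set X) : Set X :=
  A ∪ {y : X | y ∉ A ∧ 0 < Q (ind A) y}

/-- `A` is lower reachable from `x`: `x ∈ Aₙ` where `n` is the first index with
`Aₙ = Aₙ₊₁` (equivalently, any such index, since the sequence is determined by
recursion and increasing). -/
def lowerReach {X : Type*} [Fintype X] (Q : (X → ℝ) → (X → ℝ)) (x : X) (A : Set X) : Prop :=
  ∃ n : ℕ, (lowerStep Q)^[n] A = (lowerStep Q)^[n + 1] A ∧ x ∈ (lowerStep Q)^[n] A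

/-- The set `𝒳_RA := {x : ∃ n ≥ 1, min T̄ⁿ 𝟙ₓ > 0}`. -/
noncomputable def XRA {X : Type*} [Fintype X] [Nonempty X]
    (T : (X → ℝ) → (X → ℝ)) : Set X :=
  {x : X | ∃ n : ℕ, 0 < minf ((conjOp T)^[n + 1] (ind {x}))}

/-- A regularly absorbing lower transition operator. -/
def RegAbs {X : Type*} [Fintype X] [Nonempty X] (T : (X → ℝ) → (X → ℝ)) : Prop :=
  (XRA T).Nonempty ∧ ∀ x : X, x ∉ XRA T → ∃ n : ℕ, 0 < T^[n + 1] (ind (XRA T)) x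

/-- The set `𝒳_1A := {x : min T̄ 𝟙ₓ > 0}`. -/
noncomputable def X1A {X : Type*} [Fintype X] [Nonempty X]
    (T : (X → ℝ) → (X → ℝ)) : Set X :=
  {x : X | 0 < minf (conjOp T (ind {x}))}

/-- A 1-step absorbing lower transition operator. -/
def OneStepAbs {X : Type*} [Fintype X] [Nonempty X] (T : (X → ℝ) → (X → ℝ)) : Prop :=
  (X1A T).Nonempty ∧ ∀ x : X, x ∉ X1A T → 0 < T (ind (X1A T)) x

/-- The operator (sup) norm of a non-negatively homogeneous operator. -/
noncomputable def opN {X : Type*} [Fintype X] (Q : (X → ℝ) → (X → ℝ)) : ℝ :=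
  sSup {r : ℝ | ∃ f : X → ℝ, ‖f‖ = 1 ∧ r = ‖Q f‖}

namespace Helpers
variable {X : Type*} [Fintype X] [Nonempty X]

lemma minf_le (f : X → ℝ) (x : X) : minf f ≤ f x :=
  Finset.inf'_le _ (Finset.mem_univ x)

lemma le_maxf (f : X → ℝ) (x : X) : f x ≤ maxf f :=
  Finset.le_sup' _ (Finset.mem_univ x)

lemma minf_const (c : ℝ) : minf (fun _ : X => c) = c := Finset.inf'_const _ _
lemma maxf_const (c : ℝ) : maxf (fun _ : X => c) = c := Finset.sup'_const _ _

lemma exists_minf (f : X → ℝ) : ∃ x, minf f = f x := by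
  obtain ⟨x, -, h⟩ := Finset.exists_mem_eq_inf' (Finset.univ_nonempty (α := X)) f
  exact ⟨x, h⟩

lemma exists_maxf (f : X → ℝ) : ∃ x, maxf f = f x := by
  obtain ⟨x, -, h⟩ := Finset.exists_mem_eq_sup' (Finset.univ_nonempty (α := X)) f
  exact ⟨x, h⟩

lemma le_minf {f : X → ℝ} {c : ℝ} (h : ∀ x, c ≤ f x) : c ≤ minf f :=
  Finset.le_inf' _ _ (fun x _ => h x)

lemma maxf_le {f : X → ℝ} {c : ℝ} (h : ∀ x, f x ≤ c) : maxf f ≤ c :=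
  Finset.sup'_le _ _ (fun x _ => h x)

lemma minf_mono {f g : X → ℝ} (h : ∀ x, f x ≤ g x) : minf f ≤ minf g := by
  obtain ⟨x, hx⟩ := exists_minf g
  exact hx ▸ le_trans (minf_le f x) (h x)

lemma maxf_mono {f g : X → ℝ} (h : ∀ x, f x ≤ g x) : maxf f ≤ maxf g := by
  obtain ⟨x, hx⟩ := exists_maxf f
  exact hx ▸ le_trans (h x) (le_maxf g x)

lemma pos_minf {f : X → ℝ} (h : ∀ x, 0 < f x) : 0 < minf f :=
  (Finset.lt_inf'_iff _).mpr (fun x _ => h x)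

lemma minf_le_maxf (f : X → ℝ) : minf f ≤ maxf f :=
  le_trans (minf_le f (Classical.arbitrary X)) (le_maxf f _)

lemma maxf_neg (f : X → ℝ) : maxf (fun x => -f x) = -minf f := by
  apply le_antisymm
  · exact maxf_le (fun x => by simpa using minf_le f x)
  · obtain ⟨x, hx⟩ := exists_minf f
    rw [hx]
    simpa using le_maxf (fun x => -f x) x

variable {T : (X → ℝ) → (X → ℝ)} (hT : IsLTO T)
include hT

lemma T_zero : T 0 = 0 := by
  have h := hT.2.2 0 le_rfl 0
  simpa using h

lemma T_mono {f g : X → ℝ} (h : ∀ x, f x ≤ g x) : ∀ x, T f x ≤ T g x := by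
  intro x
  have h2 := hT.2.1 f (g - f)
  have h3 : f + (g - f) = g := by ring
  rw [h3] at h2
  have h4 := h2 x
  have h5 : (0:ℝ) ≤ T (g - f) x :=
    le_trans (le_minf (fun y => by simpa using h y)) (hT.1 (g - f) x)
  simpa using le_trans (by linarith [h5] : T f x ≤ T f x + T (g - f) x) h4

lemma T_const (c : ℝ) : T (fun _ => c) = fun _ => c := by
  funext x
  apply le_antisymm
  · have h2 := hT.2.1 (fun _ => c) (fun _ => -c)
    have h3 : (fun _ : X => c) + (fun _ : X => -c) = 0 := by funext y; simp
    rw [h3, T_zero hT] at h2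
    have h4 := h2 x
    have h5 : -c ≤ T (fun _ => -c) x := le_trans (le_of_eq (minf_const _).symm) (hT.1 _ x)
    simp only [Pi.add_apply, Pi.zero_apply] at h4
    linarith
  · exact le_trans (le_of_eq (minf_const _).symm) (hT.1 _ x)

lemma T_add_const (f : X → ℝ) (c : ℝ) :
    T (fun y => f y + c) = fun y => T f y + c := by
  funext x
  apply le_antisymm
  · have h2 := hT.2.1 (fun y => f y + c) (fun _ => -c)
    have h3 : (fun y => f y + c) + (fun _ : X => -c) = f := by funext y; simp
    rw [h3] at h2
    have h4 := h2 x
    simp only [Pi.add_apply, T_const hT] at h4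
    linarith
  · have h2 := hT.2.1 f (fun _ => c)
    have h3 : f + (fun _ : X => c) = fun y => f y + c := by funext y; simp
    rw [h3] at h2
    have h4 := h2 x
    simp only [Pi.add_apply, T_const hT] at h4
    linarith

lemma T_le_maxf (f : X → ℝ) (x : X) : T f x ≤ maxf f := by
  have := T_mono hT (g := fun _ => maxf f) (fun y => le_maxf f y) x
  rwa [T_const hT] at this

-- one-step mixed inequality
lemma T_add_le (f g : X → ℝ) (x : X) : T (f + g) x ≤ T f x + conjOp T g x := by
  have h2 := hT.2.1 (f + g) (-g)
  have h3 : (f + g) + (-g) = f := by ring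
  rw [h3] at h2
  have h4 := h2 x
  simp only [Pi.add_apply, Pi.neg_apply, conjOp] at *
  linarith


lemma iter_min_le (n : ℕ) (f : X → ℝ) (x : X) : minf f ≤ T^[n] f x := by
  induction n generalizing x with
  | zero => simpa using minf_le f x
  | succ n ih =>
    rw [Function.iterate_succ_apply']
    exact le_trans (le_minf (fun y => ih y)) (hT.1 _ x)

lemma iter_le_max (n : ℕ) (f : X → ℝ) (x : X) : T^[n] f x ≤ maxf f := by
  induction n generalizing x with
  | zero => simpa using le_maxf f x
  | succ n ih =>
    rw [Function.iterate_succ_apply']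
    exact le_trans (T_le_maxf hT _ x) (maxf_le (fun y => ih y))

lemma iter_mono (n : ℕ) {f g : X → ℝ} (h : ∀ x, f x ≤ g x) :
    ∀ x, T^[n] f x ≤ T^[n] g x := by
  induction n with
  | zero => simpa using h
  | succ n ih =>
    intro x
    rw [Function.iterate_succ_apply', Function.iterate_succ_apply']
    exact T_mono hT ih x

lemma iter_const (n : ℕ) (c : ℝ) : T^[n] (fun _ => c) = fun _ => c := by
  induction n with
  | zero => simp
  | succ n ih => rw [Function.iterate_succ_apply, T_const hT, ih]

lemma iter_add_const (n : ℕ) (f : X → ℝ) (c : ℝ) :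
    T^[n] (fun y => f y + c) = fun y => T^[n] f y + c := by
  induction n with
  | zero => simp
  | succ n ih =>
    rw [Function.iterate_succ_apply', ih, Function.iterate_succ_apply',
      T_add_const hT]

lemma iter_smul (n : ℕ) {l : ℝ} (hl : 0 ≤ l) (f : X → ℝ) :
    T^[n] (l • f) = l • T^[n] f := by
  induction n with
  | zero => simp
  | succ n ih =>
    rw [Function.iterate_succ_apply', ih, Function.iterate_succ_apply',
      hT.2.2 l hl]

omit [Fintype X] [Nonempty X] hT in
lemma iter_conj (n : ℕ) (f : X → ℝ) :
    (conjOp T)^[n] f = fun x => -(T^[n] (-f) x) := by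
  induction n with
  | zero => simp
  | succ n ih =>
    rw [Function.iterate_succ_apply', ih]
    funext x
    rw [Function.iterate_succ_apply']
    simp only [conjOp, Pi.neg_apply]
    congr 2
    funext y
    simp

lemma conj_iter_mono (n : ℕ) {f g : X → ℝ} (h : ∀ x, f x ≤ g x) :
    ∀ x, (conjOp T)^[n] f x ≤ (conjOp T)^[n] g x := by
  intro x
  rw [iter_conj, iter_conj]
  simp only [neg_le_neg_iff]
  exact iter_mono hT n (fun y => by simpa using h y) x

lemma conj_iter_min_le (n : ℕ) (f : X → ℝ) (x : X) :
    minf f ≤ (conjOp T)^[n] f x := by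
  rw [iter_conj]
  have h1 : T^[n] (-f) x ≤ maxf (fun y => -f y) := by
    have := iter_le_max hT n (-f) x
    exact this
  rw [maxf_neg] at h1
  simp only [neg_le_neg_iff] at *
  linarith

lemma conj_iter_const_sub (n : ℕ) (c : ℝ) (u : X → ℝ) :
    (conjOp T)^[n] (fun y => c - u y) = fun y => c - T^[n] u y := by
  rw [iter_conj]
  funext x
  have h1 : (-fun y => c - u y) = fun y => u y + (-c) := by funext y; simp; ring
  rw [h1, iter_add_const hT]
  ring

lemma conj_iter_smul (n : ℕ) {l : ℝ} (hl : 0 ≤ l) (f : X → ℝ) :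
    (conjOp T)^[n] (l • f) = l • (conjOp T)^[n] f := by
  rw [iter_conj, iter_conj]
  have h1 : -(l • f) = l • (-f) := by funext y; simp
  rw [h1, iter_smul hT n hl]
  funext x
  simp [mul_neg]

lemma conj_iter_const (n : ℕ) (c : ℝ) :
    (conjOp T)^[n] (fun _ : X => c) = fun _ => c := by
  have := conj_iter_const_sub hT n c (fun _ => 0)
  simpa [iter_const hT] using this

lemma mixed_iter (n : ℕ) (f g : X → ℝ) (x : X) :
    T^[n] (f + g) x ≤ T^[n] f x + (conjOp T)^[n] g x := by
  induction n generalizing x with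
  | zero => simp
  | succ n ih =>
    rw [Function.iterate_succ_apply' T, Function.iterate_succ_apply' T,
      Function.iterate_succ_apply' (conjOp T)]
    calc T (T^[n] (f + g)) x ≤ T (T^[n] f + (conjOp T)^[n] g) x :=
          T_mono hT (fun y => by simpa using ih y) x
      _ ≤ T (T^[n] f) x + conjOp T ((conjOp T)^[n] g) x := T_add_le hT _ _ x

lemma conj_subadd (f g : X → ℝ) (x : X) :
    conjOp T (f + g) x ≤ conjOp T f x + conjOp T g x := by
  have h2 := hT.2.1 (-f) (-g)
  have h3 : (-f) + (-g) = -(f + g) := by ring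
  rw [h3] at h2
  have h4 := h2 x
  simp only [conjOp, Pi.add_apply, Pi.neg_apply] at *
  linarith

lemma conj_zero : conjOp T 0 = 0 := by
  funext x
  simp [conjOp, T_zero hT]

lemma conj_sum_le {I : Type*} [DecidableEq I] (s : Finset I) (F : I → X → ℝ) (x : X) :
    conjOp T (∑ i ∈ s, F i) x ≤ ∑ i ∈ s, conjOp T (F i) x := by
  induction s using Finset.induction with
  | empty => simp [conj_zero hT]
  | insert _ _ hni ih =>
    rename_i a s
    rw [Finset.sum_insert hni, Finset.sum_insert hni]
    exact le_trans (conj_subadd hT _ _ x) (by linarith)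

lemma conj_iter_sum_le {I : Type*} [DecidableEq I] (n : ℕ) (s : Finset I) (F : I → X → ℝ) (x : X) :
    (conjOp T)^[n] (∑ i ∈ s, F i) x ≤ ∑ i ∈ s, (conjOp T)^[n] (F i) x := by
  induction n generalizing F x with
  | zero => simp
  | succ n ih =>
    rw [Function.iterate_succ_apply (conjOp T)]
    calc (conjOp T)^[n] (conjOp T (∑ i ∈ s, F i)) x
        ≤ (conjOp T)^[n] (∑ i ∈ s, conjOp T (F i)) x := by
          apply conj_iter_mono hT n
          intro y
          have := conj_sum_le hT s F y
          simpa using this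
      _ ≤ ∑ i ∈ s, (conjOp T)^[n] (conjOp T (F i)) x := ih _ _
      _ = ∑ i ∈ s, (conjOp T)^[n+1] (F i) x := by
          simp [Function.iterate_succ_apply (conjOp T)]

lemma T_lip (f g : X → ℝ) (x : X) :
    |T f x - T g x| ≤ maxf (fun y => |f y - g y|) := by
  set M := maxf (fun y => |f y - g y|) with hM
  have hM0 : ∀ y, |f y - g y| ≤ M := fun y => le_maxf (fun y => |f y - g y|) y
  have h1 : T f x ≤ T g x + M := by
    have := T_mono hT (f := f) (g := fun y => g y + M) (fun y => by
      show f y ≤ g y + M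
      have := hM0 y; rw [abs_le] at this; linarith) x
    rwa [T_add_const hT] at this
  have h2 : T g x ≤ T f x + M := by
    have := T_mono hT (f := g) (g := fun y => f y + M) (fun y => by
      show g y ≤ f y + M
      have := hM0 y; rw [abs_le] at this; linarith) x
    rwa [T_add_const hT] at this
  rw [abs_le]
  constructor <;> linarith

lemma iter_lip (n : ℕ) (f g : X → ℝ) (x : X) :
    |T^[n] f x - T^[n] g x| ≤ maxf (fun y => |f y - g y|) := by
  induction n generalizing x with
  | zero => simpa using le_maxf (fun y => |f y - g y|) x
  | succ n ih =>
    rw [Function.iterate_succ_apply' T, Function.iterate_succ_apply' T]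
    exact le_trans (T_lip hT _ _ x) (maxf_le (fun y => ih y))


omit hT

lemma tendsto_maxf {u : ℕ → X → ℝ} {g : X → ℝ}
    (h : ∀ x, Tendsto (fun n => u n x) atTop (𝓝 (g x))) :
    Tendsto (fun n => maxf (u n)) atTop (𝓝 (maxf g)) := by
  rw [Metric.tendsto_atTop]
  intro ε hε
  have h2 : ∀ x : X, ∃ N : ℕ, ∀ n ≥ N, |u n x - g x| < ε / 2 := by
    intro x
    have := (Metric.tendsto_atTop.mp (h x)) (ε/2) (by linarith)
    simpa [Real.dist_eq] using this
  choose N hN using h2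
  refine ⟨Finset.univ.sup N, fun n hn => ?_⟩
  have hx : ∀ x, |u n x - g x| < ε/2 := fun x =>
    hN x n (le_trans (Finset.le_sup (Finset.mem_univ x)) hn)
  rw [Real.dist_eq]
  have h1 : maxf (u n) ≤ maxf g + ε/2 := by
    apply maxf_le
    intro x
    have := hx x; rw [abs_lt] at this
    have := le_maxf g x
    linarith
  have h2 : maxf g ≤ maxf (u n) + ε/2 := by
    apply maxf_le
    intro x
    have := hx x; rw [abs_lt] at this
    have := le_maxf (u n) x
    linarith
  rw [abs_lt]
  constructor <;> linarith

lemma tendsto_minf {u : ℕ → X → ℝ} {g : X → ℝ}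
    (h : ∀ x, Tendsto (fun n => u n x) atTop (𝓝 (g x))) :
    Tendsto (fun n => minf (u n)) atTop (𝓝 (minf g)) := by
  have h1 : ∀ n, minf (u n) = -maxf (fun x => -(u n x)) := by
    intro n; rw [maxf_neg]; simp
  have h2 : minf g = -maxf (fun x => -g x) := by rw [maxf_neg]; simp
  simp only [h1, h2]
  exact (tendsto_maxf (fun x => (h x).neg)).neg

omit [Nonempty X] in
lemma exists_subseq {u : ℕ → X → ℝ} {lo hi : ℝ}
    (hb : ∀ n x, u n x ∈ Set.Icc lo hi) :
    ∃ g : X → ℝ, ∃ φ : ℕ → ℕ, StrictMono φ ∧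
      ∀ x, Tendsto (fun n => u (φ n) x) atTop (𝓝 (g x)) := by
  have hcomp : IsCompact (Set.univ.pi fun _ : X => Set.Icc lo hi) :=
    isCompact_univ_pi fun _ => isCompact_Icc
  obtain ⟨g, -, φ, hφ, hconv⟩ := hcomp.tendsto_subseq (x := u)
    (fun n => Set.mem_univ_pi.mpr (fun x => hb n x))
  exact ⟨g, φ, hφ, fun x => tendsto_pi_nhds.mp hconv x⟩

-- continuity of iterates along pointwise convergence
lemma cont_iter (hT : IsLTO T) (k : ℕ) {v : ℕ → X → ℝ} {w : X → ℝ}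
    (h : ∀ x, Tendsto (fun n => v n x) atTop (𝓝 (w x))) (x : X) :
    Tendsto (fun n => T^[k] (v n) x) atTop (𝓝 (T^[k] w x)) := by
  have hd : Tendsto (fun n => maxf (fun y => |v n y - w y|)) atTop (𝓝 0) := by
    have := tendsto_maxf (u := fun n => fun y => |v n y - w y|)
      (g := fun y => |w y - w y|) (fun y => (Tendsto.sub (h y) tendsto_const_nhds).abs)
    simpa [sub_self, maxf_const] using this
  have h0 : Tendsto (fun n => T^[k] (v n) x - T^[k] w x) atTop (𝓝 0) :=
    squeeze_zero_norm (fun n => by simpa [Real.norm_eq_abs] using iter_lip hT k (v n) w x) hd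
  have := h0.add (tendsto_const_nhds (x := T^[k] w x) (f := atTop (α := ℕ)))
  simpa using this

-- ind lemmas
omit [Fintype X] [Nonempty X] in
lemma ind_apply (A : Set X) (x : X) [Decidable (x ∈ A)] :
    ind A x = if x ∈ A then 1 else 0 := by
  simp [ind, Set.indicator_apply]

lemma ind_nonneg (A : Set X) (x : X) : 0 ≤ ind A x := by
  classical
  rw [ind_apply]; split <;> norm_num

lemma ind_singleton_self (x : X) : ind ({x} : Set X) x = 1 := by
  classical
  rw [ind_apply]; simp

lemma ind_singleton_ne {x y : X} (h : y ≠ x) : ind ({x} : Set X) y = 0 := by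
  classical
  rw [ind_apply]; simp [h]

lemma sum_ind_singleton (y : X) : (∑ x : X, ind ({x} : Set X) y) = 1 := by
  classical
  rw [Finset.sum_eq_single y]
  · exact ind_singleton_self y
  · intro b _ hb; exact ind_singleton_ne (Ne.symm hb)
  · intro h; exact absurd (Finset.mem_univ y) h

lemma ind_add_compl (A : Set X) (y : X) : ind A y + ind Aᶜ y = 1 := by
  classical
  rw [ind_apply, ind_apply]
  by_cases h : y ∈ A <;> simp [h]

end Helpers

open Helpers in
theorem dir1 {X : Type*} [Fintype X] [Nonempty X]
    (T : (X → ℝ) → (X → ℝ)) (hT : IsLTO T) (hE : ErgodicT T) : RegAbs T := by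
  classical
  choose c hc using hE
  set cb : X → ℝ := fun x => -(c (-(ind {x}))) with hcb
  have hconv : ∀ (x y : X),
      Tendsto (fun n => (conjOp T)^[n] (ind {x}) y) atTop (𝓝 (cb x)) := by
    intro x y
    have h1 : ∀ n : ℕ, (conjOp T)^[n] (ind {x}) y = -(T^[n] (-(ind {x})) y) :=
      fun n => by rw [iter_conj]
    simp only [h1]
    exact (tendsto_pi_nhds.mp (hc (-(ind {x}))) y).neg
  have y0 : X := Classical.arbitrary X
  have hposall : ∀ x : X, 0 < cb x → x ∈ XRA T := by
    intro x hx
    have hev : ∀ᶠ n in atTop, ∀ y : X, 0 < (conjOp T)^[n] (ind {x}) y :=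
      eventually_all.mpr (fun y => (hconv x y).eventually (eventually_gt_nhds hx))
    obtain ⟨N, hN⟩ := eventually_atTop.mp hev
    exact ⟨N, pos_minf (fun y => hN (N + 1) (by omega) y)⟩
  have hzero : ∀ z : X, z ∉ XRA T → cb z = 0 := by
    intro z hz
    have hle : cb z ≤ 0 := by
      by_contra h
      exact hz (hposall z (lt_of_not_ge h))
    have hge : 0 ≤ cb z := by
      refine ge_of_tendsto' (hconv z y0) (fun n => ?_)
      exact le_trans (le_minf (fun w => ind_nonneg _ w)) (conj_iter_min_le hT n _ y0)
    linarith
  have hsum1 : ∀ (n : ℕ) (y : X), (1:ℝ) ≤ ∑ x : X, (conjOp T)^[n] (ind ({x} : Set X)) y := by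
    intro n y
    have h1 : (∑ x : X, ind ({x} : Set X)) = fun _ : X => (1 : ℝ) := by
      funext z
      rw [Finset.sum_apply]
      exact sum_ind_singleton z
    have h2 := conj_iter_sum_le hT n Finset.univ (fun x => ind ({x} : Set X)) y
    rw [h1, conj_iter_const hT] at h2
    exact h2
  constructor
  · -- XRA nonempty
    have hlim : Tendsto (fun n => ∑ x : X, (conjOp T)^[n] (ind ({x}:Set X)) y0)
        atTop (𝓝 (∑ x : X, cb x)) :=
      tendsto_finset_sum _ (fun x _ => hconv x y0)
    have hge : (1:ℝ) ≤ ∑ x : X, cb x := ge_of_tendsto' hlim (fun n => hsum1 n y0)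
    have hex : ∃ x : X, 0 < cb x := by
      by_contra h
      push_neg at h
      have := Finset.sum_nonpos (fun x (_ : x ∈ Finset.univ) => h x)
      linarith
    obtain ⟨x, hx⟩ := hex
    exact ⟨x, hposall x hx⟩
  · intro x hx
    set A := XRA T with hA
    set s : Finset X := Finset.univ.filter (fun z => z ∉ A) with hs
    have hcmp : ∀ (n : ℕ) (y : X), (conjOp T)^[n] (ind Aᶜ) y ≤
        ∑ z ∈ s, (conjOp T)^[n] (ind ({z} : Set X)) y := by
      intro n y
      refine le_trans (conj_iter_mono hT n (f := ind Aᶜ)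
        (g := ∑ z ∈ s, ind ({z} : Set X)) ?_ y) (conj_iter_sum_le hT n s _ y)
      intro w
      rw [Finset.sum_apply]
      by_cases hw : w ∈ A
      · have h0 : ind Aᶜ w = 0 := by
          rw [ind_apply]
          simp [hw]
        rw [h0]
        exact Finset.sum_nonneg (fun z _ => ind_nonneg _ w)
      · have h0 : ind Aᶜ w = 1 := by
          rw [ind_apply]
          simp [hw]
        rw [h0]
        have hmem : w ∈ s := by simp [hs, hw]
        have := Finset.single_le_sum (f := fun z => ind ({z}:Set X) w)
          (fun z _ => ind_nonneg _ w) hmem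
        simpa [ind_singleton_self] using this
    have hsum0 : Tendsto (fun n => ∑ z ∈ s, (conjOp T)^[n] (ind ({z}:Set X)) x)
        atTop (𝓝 0) := by
      have h1 : (∑ z ∈ s, cb z) = 0 := by
        refine Finset.sum_eq_zero (fun z hz => ?_)
        have : z ∉ A := by simpa [hs] using hz
        exact hzero z this
      have := tendsto_finset_sum s (fun z (_ : z ∈ s) => hconv z x)
      rwa [h1] at this
    obtain ⟨N, hN⟩ := eventually_atTop.mp (hsum0.eventually (eventually_lt_nhds one_pos))
    refine ⟨N, ?_⟩
    have h2 := mixed_iter hT (N+1) (ind A) (ind Aᶜ) x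
    have h3 : ind A + ind Aᶜ = fun _ : X => (1:ℝ) := by
      funext w
      exact ind_add_compl A w
    rw [h3, iter_const hT] at h2
    simp only at h2
    have h4 := lt_of_le_of_lt (hcmp (N+1) x) (hN (N+1) (by omega))
    linarith

open Helpers in
theorem dir2 {X : Type*} [Fintype X] [Nonempty X]
    (T : (X → ℝ) → (X → ℝ)) (hT : IsLTO T) (hRA : RegAbs T) : ErgodicT T := by
  classical
  intro f
  set A := XRA T with hA
  set seq : ℕ → X → ℝ := fun n => T^[n] f with hseq
  set amin : ℕ → ℝ := fun n => minf (seq n) with hamin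
  set bmax : ℕ → ℝ := fun n => maxf (seq n) with hbmax
  have hbound : ∀ n x, seq n x ∈ Set.Icc (minf f) (maxf f) :=
    fun n x => ⟨iter_min_le hT n f x, iter_le_max hT n f x⟩
  have hstep : ∀ n x, seq (n+1) x = T (seq n) x := by
    intro n x
    simp only [hseq]
    rw [Function.iterate_succ_apply']
  have hmono : Monotone amin := by
    apply monotone_nat_of_le_succ
    intro n
    apply le_minf
    intro x
    rw [hstep]
    exact hT.1 _ x
  have hanti : Antitone bmax := by
    apply antitone_nat_of_succ_le
    intro n
    apply maxf_le
    intro x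
    rw [hstep]
    exact T_le_maxf hT _ x
  set a := ⨆ n, amin n with ha'
  set b := ⨅ n, bmax n with hb'
  have ha : Tendsto amin atTop (𝓝 a) := by
    apply tendsto_atTop_ciSup hmono
    refine ⟨maxf f, ?_⟩
    rintro r ⟨n, rfl⟩
    exact le_trans (minf_le _ (Classical.arbitrary X)) (hbound n _).2
  have hb : Tendsto bmax atTop (𝓝 b) := by
    apply tendsto_atTop_ciInf hanti
    refine ⟨minf f, ?_⟩
    rintro r ⟨n, rfl⟩
    exact le_trans (hbound n (Classical.arbitrary X)).1 (le_maxf _ _)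
  have hab : a ≤ b := le_of_tendsto_of_tendsto' ha hb (fun n => minf_le_maxf (seq n))
  have keyfacts : ∀ (ψ : ℕ → ℕ), Tendsto ψ atTop atTop → ∀ (g' : X → ℝ),
      (∀ x, Tendsto (fun n => seq (ψ n) x) atTop (𝓝 (g' x))) →
      (∀ k, maxf (T^[k] g') = b) ∧ (∀ x, a ≤ g' x) := by
    intro ψ hψ g' hg'
    constructor
    · intro k
      have h1 : ∀ x, Tendsto (fun n => T^[k] (seq (ψ n)) x) atTop (𝓝 (T^[k] g' x)) :=
        fun x => cont_iter hT k hg' x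
      have h3 : Tendsto (fun n => maxf (T^[k] (seq (ψ n)))) atTop (𝓝 (maxf (T^[k] g'))) :=
        tendsto_maxf h1
      have h4 : Tendsto (fun n => maxf (T^[k] (seq (ψ n)))) atTop (𝓝 b) := by
        have h5 : ∀ n, maxf (T^[k] (seq (ψ n))) = bmax (k + ψ n) := by
          intro n
          simp only [hbmax, hseq]
          congr 1
          funext x
          rw [Function.iterate_add_apply]
        simp only [h5]
        exact hb.comp (tendsto_atTop_mono (fun n => Nat.le_add_left _ _) hψ)
      exact tendsto_nhds_unique h3 h4
    · intro x
      exact le_of_tendsto_of_tendsto' (ha.comp hψ) (hg' x) (fun n => minf_le _ _)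
  have onA : ∀ (g' : X → ℝ), (∀ k, maxf (T^[k] g') = b) → ∀ x ∈ A, g' x = b := by
    intro g' hmax x hxA
    have hg0 : maxf g' = b := by
      have := hmax 0
      simpa using this
    have hgle : ∀ y, g' y ≤ b := fun y => hg0 ▸ le_maxf g' y
    by_contra hne'
    have hlt' : g' x < b := lt_of_le_of_ne (hgle x) hne'
    obtain ⟨n, hn⟩ := hxA
    set N := n + 1 with hN
    set δ := minf ((conjOp T)^[N] (ind ({x} : Set X))) with hδ
    have hδpos : 0 < δ := hn
    have hl : (0:ℝ) ≤ b - g' x := by linarith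
    have hpt : ∀ y, ((b - g' x) • ind ({x}:Set X)) y ≤ b - g' y := by
      intro y
      simp only [Pi.smul_apply, smul_eq_mul]
      by_cases hy : y = x
      · subst hy
        rw [ind_singleton_self]
        simp
      · rw [ind_singleton_ne hy]
        simp
        linarith [hgle y]
    have h2 := conj_iter_mono hT N (f := (b - g' x) • ind ({x}:Set X))
      (g := fun y => b - g' y) hpt
    rw [conj_iter_smul hT N hl, conj_iter_const_sub hT N b g'] at h2
    have h5 : ∀ y, T^[N] g' y ≤ b - (b - g' x) * δ := by
      intro y
      have h6 := h2 y
      simp only [Pi.smul_apply, smul_eq_mul] at h6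
      have h7 : δ ≤ (conjOp T)^[N] (ind ({x}:Set X)) y := minf_le _ y
      nlinarith
    have h7 : maxf (T^[N] g') ≤ b - (b - g' x) * δ := maxf_le h5
    rw [hmax N] at h7
    nlinarith
  have hae : a = b := by
    by_contra hne
    have hlt : a < b := lt_of_le_of_ne hab hne
    obtain ⟨g, φ, hφ, hg⟩ := exists_subseq hbound
    obtain ⟨hmaxg, hag⟩ := keyfacts φ hφ.tendsto_atTop g hg
    have hming : minf g = a :=
      tendsto_nhds_unique (tendsto_minf hg) (ha.comp hφ.tendsto_atTop)
    obtain ⟨x0, hx0⟩ := exists_minf g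
    have hgx0 : g x0 = a := by rw [← hx0, hming]
    have hx0A : x0 ∉ A := by
      intro hmem
      have := onA g hmaxg x0 hmem
      rw [hgx0] at this
      exact hne this
    obtain ⟨m', hm'⟩ := hRA.2 x0 hx0A
    set m := m' + 1 with hm
    set u : ℕ → X → ℝ := fun n => seq (φ (n + m) - m) with hu
    have hub : ∀ n x, u n x ∈ Set.Icc (minf f) (maxf f) := fun n x => hbound _ x
    obtain ⟨g', ρ, hρ, hg'⟩ := exists_subseq hub
    set ψ : ℕ → ℕ := fun n => φ (ρ n + m) - m with hψdef
    have hψm : ∀ n, ψ n + m = φ (ρ n + m) := by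
      intro n
      have h1 : m ≤ φ (ρ n + m) := le_trans (Nat.le_add_left m (ρ n)) hφ.le_apply
      show φ (ρ n + m) - m + m = φ (ρ n + m)
      omega
    have hψatTop : Tendsto ψ atTop atTop := by
      have hn : ∀ n, n ≤ ψ n := by
        intro n
        have h1 : ρ n + m ≤ φ (ρ n + m) := hφ.le_apply
        have h2 : n ≤ ρ n := hρ.le_apply
        show n ≤ φ (ρ n + m) - m
        omega
      exact tendsto_atTop_mono hn tendsto_id
    have hg'conv : ∀ x, Tendsto (fun n => seq (ψ n) x) atTop (𝓝 (g' x)) := hg'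
    obtain ⟨hmaxg', hag'⟩ := keyfacts ψ hψatTop g' hg'conv
    have hg'A : ∀ x ∈ A, g' x = b := onA g' hmaxg'
    have hTm : ∀ x, T^[m] g' x = g x := by
      intro x
      have h1 : ∀ y, Tendsto (fun n => T^[m] (seq (ψ n)) y) atTop (𝓝 (T^[m] g' y)) :=
        fun y => cont_iter hT m hg'conv y
      have h2 : ∀ n, T^[m] (seq (ψ n)) x = seq (φ (ρ n + m)) x := by
        intro n
        simp only [hseq]
        rw [← Function.iterate_add_apply]
        have h9 : m + ψ n = φ (ρ n + m) := by rw [Nat.add_comm]; exact hψm n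
        rw [h9]
      have h3 : Tendsto (fun n => seq (φ (ρ n + m)) x) atTop (𝓝 (g x)) := by
        have h4 : Tendsto (fun n => ρ n + m) atTop atTop :=
          tendsto_atTop_mono (fun n => le_trans hρ.le_apply (Nat.le_add_right _ _)) tendsto_id
        exact (hg x).comp h4
      have h5 := h1 x
      simp only [h2] at h5
      exact tendsto_nhds_unique h5 h3
    have hlow : ∀ y, (b - a) * ind A y + a ≤ g' y := by
      intro y
      by_cases hy : y ∈ A
      · rw [hg'A y hy]
        have h0 : ind A y = 1 := by rw [ind_apply]; simp [hy]
        rw [h0]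
        ring_nf
        exact le_refl b
      · have h0 : ind A y = 0 := by rw [ind_apply]; simp [hy]
        rw [h0]
        simpa using hag' y
    have hiter : T^[m] (fun y => ((b - a) • ind A) y + a) =
        fun y => ((b - a) • T^[m] (ind A)) y + a := by
      rw [iter_add_const hT m (((b - a) • ind A)) a]
      have := iter_smul hT m (by linarith : (0:ℝ) ≤ b - a) (ind A)
      rw [this]
    have h6 := iter_mono hT m (f := fun y => ((b - a) • ind A) y + a) (g := g')
      (fun y => by simpa [smul_eq_mul] using hlow y) x0
    rw [hiter, hTm x0] at h6
    simp only [Pi.smul_apply, smul_eq_mul] at h6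
    rw [hgx0] at h6
    have h8 : 0 < (b - a) * T^[m] (ind A) x0 := mul_pos (by linarith) hm'
    linarith
  refine ⟨a, tendsto_pi_nhds.mpr (fun x => ?_)⟩
  have h1 : Tendsto bmax atTop (𝓝 a) := hae ▸ hb
  exact tendsto_of_tendsto_of_tendsto_of_le_of_le ha h1
    (fun n => minf_le (seq n) x) (fun n => le_maxf (seq n) x)

/-- A lower transition operator is ergodic iff it is regularly absorbing. -/
theorem stmt14 {X : Type*} [Fintype X] [Nonempty X]
    (T : (X → ℝ) → (X → ℝ)) (hT : IsLTO T) :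
    ErgodicT T ↔ RegAbs T :=
  ⟨dir1 T hT, dir2 T hT⟩
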